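/- For the system Σ' = C₂(Σ³ - A²Σ) + Σ(-A²λ² + 2w² - 2)/2 + (w-Aλ)(Aλ+w)/C₂ + 2C₂²Σ³/λ², A' = -A³λ²/2 + AC₂(Σ²-A²) + 2AC₂²Σ²/λ² + A(2Σ + w² + 1), w' = w(C₂(λ²(Σ²-A²) + 2C₂Σ² + 2Σ)/λ² - A²λ²/2 + Σ + w² + 1), the point (Σ,A,w) = (-1/2, √C₂/(√2 λ), 0) is an equilibrium whose Jacobian has eigenvalues 1/2 - C₂/λ², (-1 - √(8C₂² + (4C₂-7)λ²)/λ)/2, and (-1 + √(8C₂² + (4C₂-7)λ²)/λ)/2. -/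

import Mathlib

noncomputable section
set_option maxHeartbeats 1000000


/-- The three-dimensional scalar-field system (γ = 2/3 case) in `(Σ, A, w)`,
with parameters `C₂` and `lam` (= λ). -/
def Fsf (C₂ lam : ℝ) : ℝ × ℝ × ℝ → ℝ × ℝ × ℝ := fun p =>
  let S := p.1; let A := p.2.1; let w := p.2.2
  (C₂ * (S ^ 3 - A ^ 2 * S) + S * (-(A ^ 2 * lam ^ 2) + 2 * w ^ 2 - 2) / 2 +
     (w - A * lam) * (A * lam + w) / C₂ + 2 * C₂ ^ 2 * S ^ 3 / lam ^ 2,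
   -(A ^ 3 * lam ^ 2) / 2 + A * C₂ * (S ^ 2 - A ^ 2) +
     2 * A * C₂ ^ 2 * S ^ 2 / lam ^ 2 + A * (2 * S + w ^ 2 + 1),
   w * (C₂ * (lam ^ 2 * (S ^ 2 - A ^ 2) + 2 * C₂ * S ^ 2 + 2 * S) / lam ^ 2 -
     A ^ 2 * lam ^ 2 / 2 + S + w ^ 2 + 1))

open ContinuousLinearMap in
/-- explicit Jacobian CLM with entries a b c d e -/
def LL (a b c d e : ℝ) : (ℝ × ℝ × ℝ) →L[ℝ] (ℝ × ℝ × ℝ) :=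
  let x := fst ℝ ℝ (ℝ × ℝ)
  let y := (fst ℝ ℝ ℝ).comp (snd ℝ ℝ (ℝ × ℝ))
  let z := (snd ℝ ℝ ℝ).comp (snd ℝ ℝ (ℝ × ℝ))
  (a • x + b • y).prod ((c • x + d • y).prod (e • z))

@[simp] lemma LL_apply (a b c d e : ℝ) (v : ℝ × ℝ × ℝ) :
    LL a b c d e v = (a * v.1 + b * v.2.1, c * v.1 + d * v.2.1, e * v.2.2) := by
  simp [LL, ContinuousLinearMap.prod_apply, mul_comm]

lemma hasFDerivAt_Fsf (C₂ lam : ℝ) (hC : 0 < C₂) (hlam : 0 < lam) :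
    HasFDerivAt (Fsf C₂ lam)
      (LL (C₂ / 2 - 1 + C₂ ^ 2 / lam ^ 2)
          (Real.sqrt C₂ / (Real.sqrt 2 * lam) * (C₂ + lam ^ 2 / 2 - 2 * lam ^ 2 / C₂))
          (Real.sqrt C₂ / (Real.sqrt 2 * lam) * (2 - C₂ - 2 * C₂ ^ 2 / lam ^ 2))
          (-(C₂ / 2) - C₂ ^ 2 / lam ^ 2)
          (1 / 2 - C₂ / lam ^ 2))
      (-(1 / 2), Real.sqrt C₂ / (Real.sqrt 2 * lam), 0) := by
  have hFsf : Fsf C₂ lam = fun p : ℝ × ℝ × ℝ =>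
      ((C₂ + 2 * C₂ ^ 2 / lam ^ 2) * (p.1 * p.1 * p.1)
        - (C₂ + lam ^ 2 / 2) * (p.2.1 * p.2.1 * p.1)
        + p.1 * (p.2.2 * p.2.2) - p.1 + (p.2.2 * p.2.2) * C₂⁻¹
        - (lam ^ 2 / C₂) * (p.2.1 * p.2.1),
       (C₂ + 2 * C₂ ^ 2 / lam ^ 2) * (p.2.1 * (p.1 * p.1))
        - (lam ^ 2 / 2 + C₂) * (p.2.1 * p.2.1 * p.2.1)
        + 2 * (p.2.1 * p.1) + p.2.1 * (p.2.2 * p.2.2) + p.2.1,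
       p.2.2 * ((C₂ + 2 * C₂ ^ 2 / lam ^ 2) * (p.1 * p.1)
        - (C₂ + lam ^ 2 / 2) * (p.2.1 * p.2.1)
        + (2 * C₂ / lam ^ 2 + 1) * p.1 + p.2.2 * p.2.2 + 1)) := by
    funext p
    simp only [Fsf, Prod.mk.injEq]
    have hc : C₂ ≠ 0 := hC.ne'
    have hl : lam ≠ 0 := hlam.ne'
    refine ⟨by field_simp; ring, by field_simp; ring, by field_simp; ring⟩
  rw [hFsf]
  set q : ℝ × ℝ × ℝ := (-(1 / 2), Real.sqrt C₂ / (Real.sqrt 2 * lam), 0) with hq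
  have hx : HasFDerivAt (fun p : ℝ × ℝ × ℝ => p.1)
      (ContinuousLinearMap.fst ℝ ℝ (ℝ × ℝ)) q := hasFDerivAt_fst
  have hy : HasFDerivAt (fun p : ℝ × ℝ × ℝ => p.2.1)
      ((ContinuousLinearMap.fst ℝ ℝ ℝ).comp (ContinuousLinearMap.snd ℝ ℝ (ℝ × ℝ))) q :=
    hasFDerivAt_fst.comp q hasFDerivAt_snd
  have hz : HasFDerivAt (fun p : ℝ × ℝ × ℝ => p.2.2)
      ((ContinuousLinearMap.snd ℝ ℝ ℝ).comp (ContinuousLinearMap.snd ℝ ℝ (ℝ × ℝ))) q :=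
    hasFDerivAt_snd.comp q hasFDerivAt_snd
  have H1 := (((((((hx.mul hx).mul hx).const_mul (C₂ + 2 * C₂ ^ 2 / lam ^ 2)).sub
      (((hy.mul hy).mul hx).const_mul (C₂ + lam ^ 2 / 2))).add
      (hx.mul (hz.mul hz))).sub hx).add ((hz.mul hz).mul_const C₂⁻¹)).sub
      ((hy.mul hy).const_mul (lam ^ 2 / C₂))
  have H2 := (((((hy.mul (hx.mul hx)).const_mul (C₂ + 2 * C₂ ^ 2 / lam ^ 2)).sub
      (((hy.mul hy).mul hy).const_mul (lam ^ 2 / 2 + C₂))).add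
      ((hy.mul hx).const_mul 2)).add (hy.mul (hz.mul hz))).add hy
  have H3 := hz.mul (((((((hx.mul hx).const_mul (C₂ + 2 * C₂ ^ 2 / lam ^ 2)).sub
      ((hy.mul hy).const_mul (C₂ + lam ^ 2 / 2))).add
      (hx.const_mul (2 * C₂ / lam ^ 2 + 1))).add (hz.mul hz)).add_const 1))
  have h₀ := HasFDerivAt.prodMk H1 (HasFDerivAt.prodMk H2 H3)
  convert h₀ using 2
  case e'_4 => rfl
  case e'_5 => rfl
  case e'_6 => rfl
  case e'_11 => rfl
  refine ContinuousLinearMap.ext fun v => ?_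
  have h2 : Real.sqrt 2 ^ 2 = 2 := Real.sq_sqrt (by norm_num)
  have hc2 : Real.sqrt C₂ ^ 2 = C₂ := Real.sq_sqrt hC.le
  have hc : C₂ ≠ 0 := hC.ne'
  have hl : lam ≠ 0 := hlam.ne'
  have h2' : Real.sqrt 2 ≠ 0 := by positivity
  simp only [LL_apply, hq, ContinuousLinearMap.add_apply, ContinuousLinearMap.smul_apply,
    ContinuousLinearMap.prod_apply, ContinuousLinearMap.coe_comp', Function.comp_apply,
    ContinuousLinearMap.coe_fst', ContinuousLinearMap.coe_snd', ContinuousLinearMap.sub_apply,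
    Prod.smul_mk, smul_eq_mul, Prod.mk.injEq, Pi.mul_apply, Pi.add_apply, Pi.sub_apply]
  have hp2 : Real.sqrt 2 ^ 2 = 2 := h2
  have hp3 : Real.sqrt 2 ^ 3 = 2 * Real.sqrt 2 := by
    rw [pow_succ, h2]
  have hp4 : Real.sqrt 2 ^ 4 = 4 := by
    rw [show (4:ℕ) = 2*2 from rfl, pow_mul, h2]; norm_num
  have hp5 : Real.sqrt 2 ^ 5 = 4 * Real.sqrt 2 := by
    rw [pow_succ, hp4]
  refine ⟨?_, ?_, ?_⟩ <;>
  · field_simp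
    ring_nf
    try simp only [hp2, hp3, hp4, hp5, hc2]
    try ring

/-- The point `Q₁ : (Σ, A, w) = (-1/2, √C₂/(√2 λ), 0)` is an equilibrium of the
γ = 2/3 scalar-field system whose Jacobian has eigenvalues `1/2 - C₂/λ²`,
`(-1 - √(8C₂² + (4C₂-7)λ²)/λ)/2` and `(-1 + √(8C₂² + (4C₂-7)λ²)/λ)/2`. -/
theorem Q1_eigenvalues (C₂ lam : ℝ) (hC : 0 < C₂) (hlam : 0 < lam)
    (hD : 0 ≤ 8 * C₂ ^ 2 + (4 * C₂ - 7) * lam ^ 2) :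
    letI q : ℝ × ℝ × ℝ :=
      (-(1 / 2), Real.sqrt C₂ / (Real.sqrt 2 * lam), 0)
    Fsf C₂ lam q = 0 ∧
    Module.End.HasEigenvalue ((fderiv ℝ (Fsf C₂ lam) q).toLinearMap)
      (1 / 2 - C₂ / lam ^ 2) ∧
    Module.End.HasEigenvalue ((fderiv ℝ (Fsf C₂ lam) q).toLinearMap)
      ((-1 - Real.sqrt (8 * C₂ ^ 2 + (4 * C₂ - 7) * lam ^ 2) / lam) / 2) ∧
    Module.End.HasEigenvalue ((fderiv ℝ (Fsf C₂ lam) q).toLinearMap)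
      ((-1 + Real.sqrt (8 * C₂ ^ 2 + (4 * C₂ - 7) * lam ^ 2) / lam) / 2) := by

  have hc : C₂ ≠ 0 := hC.ne'
  have hl : lam ≠ 0 := hlam.ne'
  have h2 : Real.sqrt 2 ^ 2 = 2 := Real.sq_sqrt (by norm_num)
  have hc2 : Real.sqrt C₂ ^ 2 = C₂ := Real.sq_sqrt hC.le
  have h2' : Real.sqrt 2 ≠ 0 := by positivity
  have hcs' : Real.sqrt C₂ ≠ 0 := by positivity
  set sD := Real.sqrt (8 * C₂ ^ 2 + (4 * C₂ - 7) * lam ^ 2) with hsDdef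
  have hD2 : sD ^ 2 = 8 * C₂ ^ 2 + (4 * C₂ - 7) * lam ^ 2 := Real.sq_sqrt hD
  set A := Real.sqrt C₂ / (Real.sqrt 2 * lam) with hAdef
  have hA2 : A ^ 2 = C₂ / (2 * lam ^ 2) := by
    rw [hAdef, div_pow, mul_pow, hc2, h2]
  set a := C₂ / 2 - 1 + C₂ ^ 2 / lam ^ 2 with hadef
  set b := A * (C₂ + lam ^ 2 / 2 - 2 * lam ^ 2 / C₂) with hbdef
  set c := A * (2 - C₂ - 2 * C₂ ^ 2 / lam ^ 2) with hcdef
  set d := -(C₂ / 2) - C₂ ^ 2 / lam ^ 2 with hddef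
  set e := 1 / 2 - C₂ / lam ^ 2 with hedef
  have hfd : fderiv ℝ (Fsf C₂ lam) (-(1 / 2), A, 0) = LL a b c d e :=
    (hasFDerivAt_Fsf C₂ lam hC hlam).fderiv
  have key : ∀ (μ : ℝ) (v : ℝ × ℝ × ℝ), v ≠ 0 → LL a b c d e v = μ • v →
      Module.End.HasEigenvalue ((fderiv ℝ (Fsf C₂ lam) (-(1 / 2), A, 0)).toLinearMap) μ := by
    intro μ v hv0 hv
    refine Module.End.hasEigenvalue_of_hasEigenvector
      ⟨Module.End.mem_eigenspace_iff.mpr ?_, hv0⟩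
    show (fderiv ℝ (Fsf C₂ lam) (-(1 / 2), A, 0)) v = μ • v
    rw [hfd]; exact hv
  have htr : a + d = -1 := by rw [hadef, hddef]; ring
  have hAne : A ≠ 0 := by rw [hAdef]; positivity
  have had : a * d - b * c = (2 * lam ^ 2 - C₂ * lam ^ 2 - 2 * C₂ ^ 2) / lam ^ 2 := by
    have hbc : b * c = C₂ / (2 * lam ^ 2) *
        ((C₂ + lam ^ 2 / 2 - 2 * lam ^ 2 / C₂) * (2 - C₂ - 2 * C₂ ^ 2 / lam ^ 2)) := by
      rw [hbdef, hcdef, show A * (C₂ + lam ^ 2 / 2 - 2 * lam ^ 2 / C₂) *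
        (A * (2 - C₂ - 2 * C₂ ^ 2 / lam ^ 2)) = A ^ 2 *
        ((C₂ + lam ^ 2 / 2 - 2 * lam ^ 2 / C₂) * (2 - C₂ - 2 * C₂ ^ 2 / lam ^ 2)) from by ring,
        hA2]
    rw [hadef, hddef, hbc]
    field_simp
    ring
  have eig2 : ∀ μ : ℝ, μ ^ 2 + μ = (2 * C₂ ^ 2 + C₂ * lam ^ 2 - 2 * lam ^ 2) / lam ^ 2 →
      Module.End.HasEigenvalue ((fderiv ℝ (Fsf C₂ lam)
        (-(1 / 2), Real.sqrt C₂ / (Real.sqrt 2 * lam), 0)).toLinearMap) μ := by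
    intro μ hchar
    by_cases hb0 : C₂ + lam ^ 2 / 2 - 2 * lam ^ 2 / C₂ = 0
    · have hb : b = 0 := by rw [hbdef, hb0, mul_zero]
      have hba : C₂ ^ 2 + C₂ * lam ^ 2 / 2 - 2 * lam ^ 2 = 0 := by
        field_simp at hb0
        linear_combination hb0 / 2
      have ha1 : a = 1 := by
        rw [hadef]; field_simp; linear_combination 2 * hba
      have hd2 : d = -2 := by
        rw [hddef]; field_simp; linear_combination -2 * hba
      have hK : (2 * C₂ ^ 2 + C₂ * lam ^ 2 - 2 * lam ^ 2) / lam ^ 2 = 2 := by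
        field_simp; linear_combination 2 * hba
      rw [hK] at hchar
      have hmu : (μ - 1) * (μ + 2) = 0 := by linear_combination hchar
      rcases mul_eq_zero.mp hmu with h1 | h1
      · have hμ : μ = 1 := by linarith
        refine key μ (3, c, 0) ?_ ?_
        · intro h
          have := congrArg Prod.fst h
          norm_num at this
        · rw [LL_apply]
          show _ = (μ * 3, μ * c, μ * 0)
          rw [hμ, ha1, hd2, hb]
          norm_num
          ring
      · have hμ : μ = -2 := by linarith
        refine key μ (0, 1, 0) ?_ ?_
        · intro h
          have := congrArg (fun p : ℝ × ℝ × ℝ => p.2.1) h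
          norm_num at this
        · rw [LL_apply]
          show _ = (μ * 0, μ * 1, μ * 0)
          rw [hμ, hd2, hb]
          norm_num
    · have hbne : b ≠ 0 := by rw [hbdef]; exact mul_ne_zero hAne hb0
      refine key μ (b, μ - a, 0) ?_ ?_
      · intro h
        exact hbne (by simpa using congrArg Prod.fst h)
      · rw [LL_apply]
        show _ = (μ * b, μ * (μ - a), μ * 0)
        refine Prod.ext ?_ (Prod.ext ?_ ?_)
        · show a * b + b * (μ - a) = μ * b
          ring
        · show c * b + d * (μ - a) = μ * (μ - a)
          linear_combination (-1 : ℝ) * hchar - had + μ * htr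
        · show e * 0 = μ * 0
          ring
  refine ⟨?_, ?_, ?_, ?_⟩
  · -- equilibrium
    show Fsf C₂ lam (-(1 / 2), A, 0) = 0
    simp only [Fsf, Prod.mk.injEq]
    have : ((0 : ℝ), (0 : ℝ), (0 : ℝ)) = (0 : ℝ × ℝ × ℝ) := rfl
    rw [← this, Prod.mk.injEq, Prod.mk.injEq]
    have hp4 : Real.sqrt 2 ^ 4 = 4 := by
      rw [show (4:ℕ) = 2*2 from rfl, pow_mul, h2]; norm_num
    have hi2 : (Real.sqrt 2)⁻¹ ^ 2 = (2:ℝ)⁻¹ := by rw [inv_pow, h2]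
    have hp6 : Real.sqrt 2 ^ 6 = 8 := by
      rw [show Real.sqrt 2 ^ 6 = (Real.sqrt 2 ^ 2) ^ 3 by ring, h2]; norm_num
    have hq3 : Real.sqrt C₂ ^ 3 = C₂ * Real.sqrt C₂ := by
      rw [pow_succ, hc2]
    have hic2 : (Real.sqrt C₂)⁻¹ ^ 2 = C₂⁻¹ := by rw [inv_pow, hc2]
    have hA3 : A ^ 3 = A * (C₂ / (2 * lam ^ 2)) := by rw [pow_succ, hA2]; ring
    refine ⟨?_, ?_, ?_⟩
    all_goals
    · try field_simp
      try ring_nf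
      iterate 3
        try simp only [h2, hc2, hp4, hp6, hq3, hi2, hic2, hA2, hA3]
        try field_simp
        try ring_nf
      try ring
  · -- eigenvalue e
    refine key e (0, 0, 1) ?_ ?_
    · intro h
      rw [Prod.ext_iff, Prod.ext_iff] at h
      exact one_ne_zero h.2.2
    · rw [LL_apply]
      show _ = (e * 0, e * 0, e * 1)
      norm_num
  · -- eigenvalue μm
    exact eig2 _ (by field_simp; linear_combination hD2)
  · -- eigenvalue μp
    exact eig2 _ (by field_simp; linear_combination hD2)
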